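/- arXiv:1708.08083 — 6 statements merged into one kernel-verified Lean document; each statement's English description precedes it below -/
import Mathlib

section
/- For every field F, there exist fourteen linear forms u₁,…,u₇, v₁,…,v₇ from the space of 2×2 matrices over F to F, and seven 2×2 matrices W₁,…,W₇ over F, such that for all 2×2 matrices X and Y over F the product satisfies X·Y = Σ_{k=1}^{7} u_k(X)·v_k(Y)·W_k. -/
/-- Linear form `X ↦ a*X₀₀ + b*X₀₁ + c*X₁₀ + d*X₁₁`. -/
def strassenForm {F : Type*} [Field F] (a b c d : F) :
    Matrix (Fin 2) (Fin 2) F →ₗ[F] F where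
  toFun X := a * X 0 0 + b * X 0 1 + c * X 1 0 + d * X 1 1
  map_add' X Y := by simp [Matrix.add_apply]; ring
  map_smul' r X := by simp [Matrix.smul_apply, smul_eq_mul]; ring

/-- Strassen's algorithm: 2×2 matrix multiplication with 7 bilinear products. -/
theorem strassen_seven_multiplications (F : Type*) [Field F] :
    ∃ (u v : Fin 7 → (Matrix (Fin 2) (Fin 2) F →ₗ[F] F))
      (W : Fin 7 → Matrix (Fin 2) (Fin 2) F),
      ∀ X Y : Matrix (Fin 2) (Fin 2) F,
        X * Y = ∑ k : Fin 7, (u k X * v k Y) • W k := by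
  refine ⟨![strassenForm 1 0 0 1, strassenForm 0 0 1 1, strassenForm 1 0 0 0,
            strassenForm 0 0 0 1, strassenForm 1 1 0 0, strassenForm (-1) 0 1 0,
            strassenForm 0 1 0 (-1)],
          ![strassenForm 1 0 0 1, strassenForm 1 0 0 0, strassenForm 0 1 0 (-1),
            strassenForm (-1) 0 1 0, strassenForm 0 0 0 1, strassenForm 1 1 0 0,
            strassenForm 0 0 1 1],
          ![!![1,0;0,1], !![0,0;1,-1], !![0,1;0,1], !![1,0;1,0],
            !![-1,1;0,0], !![0,0;0,1], !![1,0;0,0]], ?_⟩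
  intro X Y
  ext i j
  fin_cases i <;> fin_cases j <;>
    simp [Matrix.mul_apply, Fin.sum_univ_succ, strassenForm, Matrix.smul_apply] <;> ring
end

section
/- For every field F, there exist twenty-one linear forms u₁,…,u₇, v₁,…,v₇, w₁,…,w₇ from the space of 2×2 matrices over F to F such that for all 2×2 matrices X, Y, Z over F one has tr(XYZ) = Σ_{k=1}^{7} u_k(X)·v_k(Y)·w_k(Z). -/
private def E (F : Type*) [Field F] (i j : Fin 2) : Matrix (Fin 2) (Fin 2) F →ₗ[F] F where
  toFun M := M i j
  map_add' _ _ := rfl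
  map_smul' _ _ := rfl

private lemma E_apply (F : Type*) [Field F] (i j : Fin 2) (M : Matrix (Fin 2) (Fin 2) F) :
    E F i j M = M i j := rfl

/-- Trilinear formulation of Strassen's algorithm. -/
theorem strassen_trilinear (F : Type*) [Field F] :
    ∃ (u v w : Fin 7 → (Matrix (Fin 2) (Fin 2) F →ₗ[F] F)),
      ∀ X Y Z : Matrix (Fin 2) (Fin 2) F,
        (X * Y * Z).trace = ∑ k : Fin 7, u k X * v k Y * w k Z := by
  refine ⟨![E F 0 0 + E F 1 1, E F 1 0 + E F 1 1, E F 0 0, E F 1 1,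
            E F 0 0 + E F 0 1, E F 1 0 - E F 0 0, E F 0 1 - E F 1 1],
          ![E F 0 0 + E F 1 1, E F 0 0, E F 0 1 - E F 1 1, E F 1 0 - E F 0 0,
            E F 1 1, E F 0 0 + E F 0 1, E F 1 0 + E F 1 1],
          ![E F 0 0 + E F 1 1, E F 0 1 - E F 1 1, E F 1 0 + E F 1 1, E F 0 0 + E F 0 1,
            E F 1 0 - E F 0 0, E F 1 1, E F 0 0], ?_⟩
  intro X Y Z
  simp [Matrix.trace, Matrix.mul_apply, Fin.sum_univ_succ, E_apply, Matrix.diag]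
  ring
end

section
/- Let D be a 2×2 matrix over a field F with determinant 1 and trace -1 that is not a scalar multiple of the identity, let u be a column vector in F² such that u and Du are linearly independent, let u^⊥ be the unique row vector with u^⊥·u = 0 and u^⊥·(Du) = 1, and set M = u·u^⊥. Then the three matrices M, D⁻¹MD, and DMD⁻¹ form a basis of the F-vector space of traceless 2×2 matrices over F. -/
open Matrix

lemma vecMulVec_mulVec' {F : Type*} [Field F] (u up x : Fin 2 → F) :
    (vecMulVec u up).mulVec x = (up ⬝ᵥ x) • u := by
  funext i
  simp [vecMulVec, mulVec, dotProduct, Fin.sum_univ_two]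
  ring

/-- M, D⁻¹MD, DMD⁻¹ form a basis of the space of traceless 2×2 matrices. -/
theorem conjugates_basis_traceless {F : Type*} [Field F] (D : Matrix (Fin 2) (Fin 2) F)
    (hdet : D.det = 1) (htr : D.trace = -1) (hnotscalar : ∀ c : F, D ≠ c • (1 : Matrix (Fin 2) (Fin 2) F))
    (u : Fin 2 → F) (hli : LinearIndependent F ![u, D.mulVec u])
    (up : Fin 2 → F) (h0 : up ⬝ᵥ u = 0) (h1 : up ⬝ᵥ D.mulVec u = 1)
    (M : Matrix (Fin 2) (Fin 2) F) (hM : M = vecMulVec u up) :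
    LinearIndependent F ![M, D⁻¹ * M * D, D * M * D⁻¹] ∧
      Submodule.span F (Set.range ![M, D⁻¹ * M * D, D * M * D⁻¹]) =
        LinearMap.ker (Matrix.traceLinearMap (Fin 2) F F) := by
  -- Cayley–Hamilton: D² + D + 1 = 0
  have hdet' : D 0 0 * D 1 1 - D 0 1 * D 1 0 = 1 := by rw [← Matrix.det_fin_two]; exact hdet
  have htr' : D 0 0 + D 1 1 = -1 := by rw [← Matrix.trace_fin_two]; exact htr
  have hCH : D * D + D + 1 = 0 := by
    ext i j
    fin_cases i <;> fin_cases j <;>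
      simp [Matrix.mul_apply, Fin.sum_univ_two, Matrix.one_apply] <;>
      first
        | linear_combination D 0 0 * htr' - hdet'
        | linear_combination -(D 0 0 * htr' - hdet')
        | linear_combination D 0 1 * htr'
        | linear_combination -(D 0 1 * htr')
        | linear_combination D 1 0 * htr'
        | linear_combination -(D 1 0 * htr')
        | linear_combination D 1 1 * htr' - hdet'
        | linear_combination -(D 1 1 * htr' - hdet')
        | linear_combination -hdet'
        | linear_combination hdet'
        | linear_combination (D 0 1 - D 0 0) * htr'
        | linear_combination (D 0 0 - D 0 1) * htr'
        | linear_combination (D 1 1 - D 1 0) * htr' - hdet'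
        | linear_combination (D 1 0 - D 1 1) * htr' + hdet'
        | linear_combination (D 1 0 - D 0 0) * htr'
        | linear_combination (D 0 0 - D 1 0) * htr'
  have hone : -(D * D + D) = 1 := (eq_neg_of_add_eq_zero_right hCH).symm
  have hD2 : D * D = -(D + 1) := by
    apply eq_neg_of_add_eq_zero_left
    rw [← add_assoc]; exact hCH
  have hDinv : D⁻¹ = -(D + 1) := by
    apply Matrix.inv_eq_right_inv
    have h' : D * -(D + 1) = -(D * D + D) := by noncomm_ring
    rw [h', hone]
  set v : Fin 2 → F := D.mulVec u with hv
  -- basic mulVec facts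
  have hMu : M.mulVec u = 0 := by rw [hM, vecMulVec_mulVec', h0, zero_smul]
  have hMv : M.mulVec v = u := by rw [hM, vecMulVec_mulVec', h1, one_smul]
  have hDv : D.mulVec v = -u - v := by
    rw [hv, Matrix.mulVec_mulVec, hD2, Matrix.neg_mulVec, Matrix.add_mulVec,
      Matrix.one_mulVec]
    module
  have hDinvu : D⁻¹.mulVec u = -u - v := by
    rw [hDinv, Matrix.neg_mulVec, Matrix.add_mulVec, Matrix.one_mulVec, ← hv]
    module
  have hDinvv : D⁻¹.mulVec v = u := by
    rw [hDinv, Matrix.neg_mulVec, Matrix.add_mulVec, Matrix.one_mulVec, hDv]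
    module
  set B := D⁻¹ * M * D with hB
  set C := D * M * D⁻¹ with hC
  have hBu : B.mulVec u = -u - v := by
    rw [hB, ← Matrix.mulVec_mulVec, ← Matrix.mulVec_mulVec, ← hv, hMv, hDinvu]
  have hMuv : M.mulVec (-u - v) = -u := by
    rw [show -u - v = -u + -v by module, Matrix.mulVec_add, Matrix.mulVec_neg,
      Matrix.mulVec_neg, hMu, hMv]
    module
  have hBv : B.mulVec v = u + v := by
    rw [hB, ← Matrix.mulVec_mulVec, ← Matrix.mulVec_mulVec, hDv, hMuv,
      Matrix.mulVec_neg, hDinvu]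
    module
  have hCu : C.mulVec u = -v := by
    rw [hC, ← Matrix.mulVec_mulVec, ← Matrix.mulVec_mulVec, hDinvu, hMuv,
      Matrix.mulVec_neg, ← hv]
  have hCv : C.mulVec v = 0 := by
    rw [hC, ← Matrix.mulVec_mulVec, ← Matrix.mulVec_mulVec, hDinvv, hMu,
      Matrix.mulVec_zero]
  -- linear independence of u, v as a convenient statement
  have hli2 : ∀ a b : F, a • u + b • v = 0 → a = 0 ∧ b = 0 := by
    intro a b hab
    have := Fintype.linearIndependent_iff.mp hli ![a, b] ?_
    · exact ⟨this 0, this 1⟩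
    · simpa [Fin.sum_univ_two] using hab
  have hind : LinearIndependent F ![M, B, C] := by
    rw [Fintype.linearIndependent_iff]
    intro g hg
    have hT : (g 0 • M + g 1 • B + g 2 • C) = 0 := by
      simpa [Fin.sum_univ_three] using hg
    have hTu : (g 0 • M + g 1 • B + g 2 • C).mulVec u = 0 := by rw [hT, Matrix.zero_mulVec]
    have hTv : (g 0 • M + g 1 • B + g 2 • C).mulVec v = 0 := by rw [hT, Matrix.zero_mulVec]
    rw [Matrix.add_mulVec, Matrix.add_mulVec, Matrix.smul_mulVec,
      Matrix.smul_mulVec, Matrix.smul_mulVec, hMu, hBu, hCu] at hTu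
    rw [Matrix.add_mulVec, Matrix.add_mulVec, Matrix.smul_mulVec,
      Matrix.smul_mulVec, Matrix.smul_mulVec, hMv, hBv, hCv] at hTv
    have h1' : (-(g 1)) • u + (-(g 1) - g 2) • v = 0 := by
      rw [← hTu]; module
    obtain ⟨e1, e2⟩ := hli2 _ _ h1'
    have hg1 : g 1 = 0 := neg_eq_zero.mp e1
    have hg2 : g 2 = 0 := by
      rw [hg1] at e2; simpa using e2
    have h2' : (g 0 + g 1) • u + (g 1) • v = 0 := by
      rw [← hTv]; module
    obtain ⟨e3, _⟩ := hli2 _ _ h2'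
    have hg0 : g 0 = 0 := by rw [hg1] at e3; simpa using e3
    intro i; fin_cases i <;> assumption
  refine ⟨hind, ?_⟩
  -- traces are zero
  have htrM : M.trace = 0 := by
    rw [hM]
    have : (vecMulVec u up).trace = up ⬝ᵥ u := by
      simp [Matrix.trace, vecMulVec, dotProduct, Fin.sum_univ_two, Matrix.diag, mul_comm]
    rw [this, h0]
  have hDD : D * D⁻¹ = 1 := by
    rw [hDinv]
    have h' : D * -(D + 1) = -(D * D + D) := by noncomm_ring
    rw [h', hone]
  have hDD' : D⁻¹ * D = 1 := by
    rw [hDinv]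
    have h' : -(D + 1) * D = -(D * D + D) := by
      have hcomm : D * D + D = D * D + 1 * D := by rw [one_mul]
      noncomm_ring
    rw [h', hone]
  have htrB : B.trace = 0 := by
    rw [hB, Matrix.trace_mul_comm, ← Matrix.mul_assoc, hDD, Matrix.one_mul, htrM]
  have htrC : C.trace = 0 := by
    rw [hC, Matrix.trace_mul_comm, ← Matrix.mul_assoc, hDD', Matrix.one_mul, htrM]
  have hle : Submodule.span F (Set.range ![M, B, C]) ≤
      LinearMap.ker (Matrix.traceLinearMap (Fin 2) F F) := by
    rw [Submodule.span_le]
    rintro x ⟨i, rfl⟩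
    fin_cases i <;> simp [LinearMap.mem_ker, htrM, htrB, htrC]
  apply Submodule.eq_of_le_of_finrank_le hle
  have hspan : Module.finrank F (Submodule.span F (Set.range ![M, B, C])) = 3 := by
    rw [finrank_span_eq_card hind, Fintype.card_fin]
  -- trace is surjective
  have hsurj : LinearMap.range (Matrix.traceLinearMap (Fin 2) F F) = ⊤ := by
    rw [LinearMap.range_eq_top]
    intro c
    refine ⟨Matrix.single 0 0 c, ?_⟩
    simp [Matrix.traceLinearMap, Matrix.trace_fin_two, Matrix.single]
  have hrn := LinearMap.finrank_range_add_finrank_ker (Matrix.traceLinearMap (Fin 2) F F)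
  rw [hsurj] at hrn
  have h4 : Module.finrank F (Matrix (Fin 2) (Fin 2) F) = 4 := by
    rw [Module.finrank_matrix]; norm_num
  rw [h4, finrank_top, Module.finrank_self] at hrn
  have hker : Module.finrank F (LinearMap.ker (Matrix.traceLinearMap (Fin 2) F F)) = 3 := by
    omega
  rw [hker, hspan]
end

section
/- Let D be a 2×2 matrix over a field F with determinant 1 and trace -1 that is not a scalar multiple of the identity, let u be a column vector in F² such that u and Du are linearly independent, let u^⊥ be the unique row vector with u^⊥·u = 0 and u^⊥·(Du) = 1, and set M = u·u^⊥. Then the four matrices D, M, D⁻¹MD, DMD⁻¹ form a basis of the F-vector space of all 2×2 matrices over F, and the four matrices D⁻¹, M, D⁻¹MD, DMD⁻¹ also form a basis of this space. -/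
open Matrix

/-- Both {D, M, D⁻¹MD, DMD⁻¹} and {D⁻¹, M, D⁻¹MD, DMD⁻¹} are bases of the space
of all 2×2 matrices. -/
theorem two_bases {F : Type*} [Field F] (D : Matrix (Fin 2) (Fin 2) F)
    (hdet : D.det = 1) (htr : D.trace = -1) (hnotscalar : ∀ c : F, D ≠ c • (1 : Matrix (Fin 2) (Fin 2) F))
    (u : Fin 2 → F) (hli : LinearIndependent F ![u, D.mulVec u])
    (up : Fin 2 → F) (h0 : up ⬝ᵥ u = 0) (h1 : up ⬝ᵥ D.mulVec u = 1)
    (M : Matrix (Fin 2) (Fin 2) F) (hM : M = vecMulVec u up) :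
    (LinearIndependent F ![D, M, D⁻¹ * M * D, D * M * D⁻¹] ∧
      Submodule.span F (Set.range ![D, M, D⁻¹ * M * D, D * M * D⁻¹]) = ⊤) ∧
    (LinearIndependent F ![D⁻¹, M, D⁻¹ * M * D, D * M * D⁻¹] ∧
      Submodule.span F (Set.range ![D⁻¹, M, D⁻¹ * M * D, D * M * D⁻¹]) = ⊤) := by
  set v : Fin 2 → F := D.mulVec u with hv
  -- Cayley–Hamilton for D
  have hdet2 : D 0 0 * D 1 1 - D 0 1 * D 1 0 = 1 := by
    rw [Matrix.det_fin_two] at hdet; exact hdet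
  have htr2 : D 0 0 + D 1 1 = -1 := by
    rw [Matrix.trace_fin_two] at htr; exact htr
  have hCH : D * D + D + 1 = 0 := by
    ext i j
    fin_cases i <;> fin_cases j <;>
      simp [Matrix.mul_apply, Fin.sum_univ_two, Matrix.one_apply] <;>
      first
        | linear_combination D 0 0 * htr2 - hdet2
        | linear_combination D 0 1 * htr2
        | linear_combination D 1 0 * htr2
        | linear_combination D 1 1 * htr2 - hdet2
  have hD2 : D * D = -D - 1 := by
    have h := hCH
    rw [add_assoc] at h
    have h2 := eq_neg_of_add_eq_zero_left h
    rw [h2, neg_add]; abel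
  have hinv : D⁻¹ = -(D + 1) := by
    apply Matrix.inv_eq_right_inv
    rw [mul_neg, mul_add, mul_one, hD2]
    abel
  -- action on u and v
  have hDv : D *ᵥ v = -u - v := by
    rw [hv, Matrix.mulVec_mulVec, hD2, Matrix.sub_mulVec, Matrix.neg_mulVec, Matrix.one_mulVec]
    abel
  have hMu : M *ᵥ u = 0 := by
    subst hM; ext i
    simp [Matrix.mulVec, Matrix.vecMulVec_apply, dotProduct, Fin.sum_univ_two] at *
    linear_combination (u i) * h0
  have hMv : M *ᵥ v = u := by
    subst hM; ext i
    simp [Matrix.mulVec, Matrix.vecMulVec_apply, dotProduct, Fin.sum_univ_two,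
      hv] at *
    linear_combination (u i) * h1
  have hIu : D⁻¹ *ᵥ u = -u - v := by
    rw [hinv, Matrix.neg_mulVec, Matrix.add_mulVec, Matrix.one_mulVec, ← hv]
    abel
  have hIv : D⁻¹ *ᵥ v = u := by
    rw [hinv, Matrix.neg_mulVec, Matrix.add_mulVec, Matrix.one_mulVec, hDv]
    abel
  have hAu : (D⁻¹ * M * D) *ᵥ u = -u - v := by
    rw [← Matrix.mulVec_mulVec, ← Matrix.mulVec_mulVec, ← hv, hMv, hIu]
  have hAv : (D⁻¹ * M * D) *ᵥ v = u + v := by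
    rw [← Matrix.mulVec_mulVec, ← Matrix.mulVec_mulVec, hDv]
    rw [show -u - v = -u + -v by abel, Matrix.mulVec_add, Matrix.mulVec_neg, Matrix.mulVec_neg,
      hMu, hMv, neg_zero, zero_add, Matrix.mulVec_neg, hIu]
    abel
  have hBu : (D * M * D⁻¹) *ᵥ u = -v := by
    rw [← Matrix.mulVec_mulVec, ← Matrix.mulVec_mulVec, hIu]
    rw [show -u - v = -u + -v by abel, Matrix.mulVec_add, Matrix.mulVec_neg, Matrix.mulVec_neg,
      hMu, hMv, neg_zero, zero_add, Matrix.mulVec_neg, ← hv]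
  have hBv : (D * M * D⁻¹) *ᵥ v = 0 := by
    rw [← Matrix.mulVec_mulVec, ← Matrix.mulVec_mulVec, hIv, hMu, Matrix.mulVec_zero]
  -- pair independence
  have pair : ∀ a b : F, a • u + b • v = 0 → a = 0 ∧ b = 0 := by
    intro a b hab
    have := Fintype.linearIndependent_iff.mp hli ![a, b]
      (by simpa [Fin.sum_univ_two, ← hv] using hab)
    exact ⟨this 0, this 1⟩
  have card4 : Fintype.card (Fin 4) = Module.finrank F (Matrix (Fin 2) (Fin 2) F) := by
    simp [Module.finrank_matrix]
  -- first family
  have li1 : LinearIndependent F ![D, M, D⁻¹ * M * D, D * M * D⁻¹] := by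
    rw [Fintype.linearIndependent_iff]
    intro g hg
    simp only [Fin.sum_univ_four, Matrix.cons_val_zero, Matrix.cons_val_one, Matrix.head_cons,
      Matrix.cons_val_two, Matrix.tail_cons, Matrix.cons_val_three] at hg
    have e1 : (-(g 2)) • u + (g 0 - g 2 - g 3) • v = 0 := by
      have h := congrArg (fun X : Matrix (Fin 2) (Fin 2) F => X *ᵥ u) hg
      simp only [Matrix.add_mulVec, Matrix.smul_mulVec, Matrix.zero_mulVec,
        ← hv, hMu, hAu, hBu] at h
      linear_combination (norm := module) h
    have e2 : (-(g 0) + g 1 + g 2) • u + (-(g 0) + g 2) • v = 0 := by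
      have h := congrArg (fun X : Matrix (Fin 2) (Fin 2) F => X *ᵥ v) hg
      simp only [Matrix.add_mulVec, Matrix.smul_mulVec, Matrix.zero_mulVec,
        hDv, hMv, hAv, hBv] at h
      linear_combination (norm := module) h
    obtain ⟨p1, p2⟩ := pair _ _ e1
    obtain ⟨p3, p4⟩ := pair _ _ e2
    have hg2 : g 2 = 0 := by linear_combination -p1
    have hg0 : g 0 = 0 := by linear_combination -p4 - p1
    have hg3 : g 3 = 0 := by linear_combination -p2 - p4
    have hg1 : g 1 = 0 := by linear_combination p3 - p4
    intro i
    fin_cases i <;> assumption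
  have li2 : LinearIndependent F ![D⁻¹, M, D⁻¹ * M * D, D * M * D⁻¹] := by
    rw [Fintype.linearIndependent_iff]
    intro g hg
    simp only [Fin.sum_univ_four, Matrix.cons_val_zero, Matrix.cons_val_one, Matrix.head_cons,
      Matrix.cons_val_two, Matrix.tail_cons, Matrix.cons_val_three] at hg
    have e1 : (-(g 0) - g 2) • u + (-(g 0) - g 2 - g 3) • v = 0 := by
      have h := congrArg (fun X : Matrix (Fin 2) (Fin 2) F => X *ᵥ u) hg
      simp only [Matrix.add_mulVec, Matrix.smul_mulVec, Matrix.zero_mulVec,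
        hIu, hMu, hAu, hBu] at h
      linear_combination (norm := module) h
    have e2 : (g 0 + g 1 + g 2) • u + (g 2) • v = 0 := by
      have h := congrArg (fun X : Matrix (Fin 2) (Fin 2) F => X *ᵥ v) hg
      simp only [Matrix.add_mulVec, Matrix.smul_mulVec, Matrix.zero_mulVec,
        hIv, hMv, hAv, hBv] at h
      linear_combination (norm := module) h
    obtain ⟨p1, p2⟩ := pair _ _ e1
    obtain ⟨p3, p4⟩ := pair _ _ e2
    have hg2 : g 2 = 0 := p4
    have hg0 : g 0 = 0 := by linear_combination -p1 - p4
    have hg3 : g 3 = 0 := by linear_combination p1 - p2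
    have hg1 : g 1 = 0 := by linear_combination p3 + p1
    intro i
    fin_cases i <;> assumption
  exact ⟨⟨li1, li1.span_eq_top_of_card_eq_finrank card4⟩,
    ⟨li2, li2.span_eq_top_of_card_eq_finrank card4⟩⟩
end

section
/- Let D be a 2×2 matrix over a field F with determinant 1 and trace -1, let u be a column vector in F² such that u and Du are linearly independent, let u^⊥ be the unique row vector with u^⊥·u = 0 and u^⊥·(Du) = 1, and set M = u·u^⊥. Then the following six multiplication-table identities hold: M·(D⁻¹MD) = -MD, M·(DMD⁻¹) = MD⁻¹, (D⁻¹MD)·M = D⁻¹M, (D⁻¹MD)·(DMD⁻¹) = -D⁻¹MD⁻¹, (DMD⁻¹)·M = -DM, and (DMD⁻¹)·(D⁻¹MD) = DMD. -/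
open Matrix

/-- Six multiplication-table identities for M and its conjugates. -/
theorem mult_table_identities {F : Type*} [Field F] (D : Matrix (Fin 2) (Fin 2) F)
    (hdet : D.det = 1) (htr : D.trace = -1)
    (u : Fin 2 → F) (hli : LinearIndependent F ![u, D.mulVec u])
    (up : Fin 2 → F) (h0 : up ⬝ᵥ u = 0) (h1 : up ⬝ᵥ D.mulVec u = 1)
    (M : Matrix (Fin 2) (Fin 2) F) (hM : M = vecMulVec u up) :
    M * (D⁻¹ * M * D) = -(M * D) ∧
    M * (D * M * D⁻¹) = M * D⁻¹ ∧
    (D⁻¹ * M * D) * M = D⁻¹ * M ∧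
    (D⁻¹ * M * D) * (D * M * D⁻¹) = -(D⁻¹ * M * D⁻¹) ∧
    (D * M * D⁻¹) * M = -(D * M) ∧
    (D * M * D⁻¹) * (D⁻¹ * M * D) = D * M * D := by
  have key : ∀ A : Matrix (Fin 2) (Fin 2) F,
      M * A * M = (up ⬝ᵥ A.mulVec u) • M := by
    intro A
    subst hM
    ext i j
    simp [Matrix.mul_apply, Matrix.vecMulVec_apply, dotProduct, Matrix.mulVec,
      Fin.sum_univ_two, smul_eq_mul]
    ring
  have hD2 : D * D = -D - 1 := by
    rw [Matrix.det_fin_two] at hdet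
    rw [Matrix.trace_fin_two] at htr
    ext i j
    fin_cases i <;> fin_cases j <;>
        simp [Matrix.mul_apply, Fin.sum_univ_two, Matrix.one_apply]
    · linear_combination D 0 0 * htr - hdet
    · linear_combination D 0 1 * htr
    · linear_combination D 1 0 * htr
    · linear_combination D 1 1 * htr - hdet
  have hinv : D⁻¹ = -D - 1 := by
    apply Matrix.inv_eq_right_inv
    calc D * (-D - 1) = -(D * D) - D := by noncomm_ring
      _ = 1 := by rw [hD2]; noncomm_ring
  have hii : D⁻¹ * D⁻¹ = D := by
    rw [hinv]
    calc (-D - 1) * (-D - 1) = (D * D) + 2 * D + 1 := by noncomm_ring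
      _ = D := by rw [hD2]; noncomm_ring
  have k2 : M * D * M = M := by rw [key D, h1, one_smul]
  have k0 : M * M = 0 := by
    have := key 1
    rw [mul_one, Matrix.one_mulVec, h0, zero_smul] at this
    rw [this]
  have k1 : M * D⁻¹ * M = -M := by
    rw [hinv, key (-D - 1)]
    rw [show (-D - 1 : Matrix (Fin 2) (Fin 2) F) *ᵥ u = -(D *ᵥ u) - u by
      simp [Matrix.sub_mulVec, Matrix.neg_mulVec]]
    rw [dotProduct_sub, dotProduct_neg, h0, h1]
    simp
  have k3 : M * (D * D) * M = -M := by
    rw [hD2, key (-D - 1)]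
    rw [show (-D - 1 : Matrix (Fin 2) (Fin 2) F) *ᵥ u = -(D *ᵥ u) - u by
      simp [Matrix.sub_mulVec, Matrix.neg_mulVec]]
    rw [dotProduct_sub, dotProduct_neg, h0, h1]
    simp
  refine ⟨?_, ?_, ?_, ?_, ?_, ?_⟩
  · calc M * (D⁻¹ * M * D) = (M * D⁻¹ * M) * D := by noncomm_ring
      _ = -M * D := by rw [k1]
      _ = -(M * D) := by noncomm_ring
  · calc M * (D * M * D⁻¹) = (M * D * M) * D⁻¹ := by noncomm_ring
      _ = M * D⁻¹ := by rw [k2]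
  · calc (D⁻¹ * M * D) * M = D⁻¹ * (M * D * M) := by noncomm_ring
      _ = D⁻¹ * M := by rw [k2]
  · calc (D⁻¹ * M * D) * (D * M * D⁻¹) = D⁻¹ * (M * (D * D) * M) * D⁻¹ := by noncomm_ring
      _ = D⁻¹ * (-M) * D⁻¹ := by rw [k3]
      _ = -(D⁻¹ * M * D⁻¹) := by noncomm_ring
  · calc (D * M * D⁻¹) * M = D * (M * D⁻¹ * M) := by noncomm_ring
      _ = D * (-M) := by rw [k1]
      _ = -(D * M) := by noncomm_ring
  · calc (D * M * D⁻¹) * (D⁻¹ * M * D) = D * (M * (D⁻¹ * D⁻¹) * M) * D := by noncomm_ring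
      _ = D * (M * D * M) * D := by rw [hii]
      _ = D * M * D := by rw [k2]
end

section
/- Let D be a 2×2 matrix over a field F with determinant 1 and trace -1, let u be a column vector in F² such that u and Du are linearly independent, let u^⊥ be the unique row vector with u^⊥·u = 0 and u^⊥·(Du) = 1, and set M = u·u^⊥. For any scalars x₁, x₂, x₃, x₄, y₁, y₂, y₃, y₄ in F, if X = x₁D + x₂M + x₃D⁻¹MD + x₄DMD⁻¹ and Y = y₁D⁻¹ + y₂M + y₃D⁻¹MD + y₄DMD⁻¹, then X·Y = x₁y₁·id + x₂(y₁+y₄)·MD⁻¹ + x₃(y₁+y₂)·D⁻¹M + x₄(y₁+y₃)·DMD + (x₁-x₄)y₂·DM + (x₁-x₂)y₃·MD + (x₁-x₃)y₄·D⁻¹MD⁻¹. -/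
open Matrix

/-- The explicit 7-term decomposition of the product XY underlying Strassen's algorithm. -/
theorem seven_term_decomposition {F : Type*} [Field F] (D : Matrix (Fin 2) (Fin 2) F)
    (hdet : D.det = 1) (htr : D.trace = -1)
    (u : Fin 2 → F) (hli : LinearIndependent F ![u, D.mulVec u])
    (up : Fin 2 → F) (h0 : up ⬝ᵥ u = 0) (h1 : up ⬝ᵥ D.mulVec u = 1)
    (M : Matrix (Fin 2) (Fin 2) F) (hM : M = vecMulVec u up)
    (x₁ x₂ x₃ x₄ y₁ y₂ y₃ y₄ : F)
    (X Y : Matrix (Fin 2) (Fin 2) F)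
    (hX : X = x₁ • D + x₂ • M + x₃ • (D⁻¹ * M * D) + x₄ • (D * M * D⁻¹))
    (hY : Y = y₁ • D⁻¹ + y₂ • M + y₃ • (D⁻¹ * M * D) + y₄ • (D * M * D⁻¹)) :
    X * Y = (x₁ * y₁) • (1 : Matrix (Fin 2) (Fin 2) F)
      + (x₂ * (y₁ + y₄)) • (M * D⁻¹)
      + (x₃ * (y₁ + y₂)) • (D⁻¹ * M)
      + (x₄ * (y₁ + y₃)) • (D * M * D)
      + ((x₁ - x₄) * y₂) • (D * M)
      + ((x₁ - x₂) * y₃) • (M * D)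
      + ((x₁ - x₃) * y₄) • (D⁻¹ * M * D⁻¹) := by
  -- Cayley–Hamilton for D
  have hDD : D * D = -1 - D := by
    rw [Matrix.det_fin_two] at hdet
    rw [Matrix.trace_fin_two] at htr
    ext i j
    fin_cases i <;> fin_cases j <;>
      simp only [Matrix.mul_apply, Fin.sum_univ_two, Matrix.sub_apply, Matrix.neg_apply,
        Matrix.one_fin_two, Matrix.cons_val', Matrix.cons_val_zero, Matrix.cons_val_one,
        Matrix.head_cons, Matrix.head_fin_const, Matrix.empty_val', Matrix.cons_val_fin_one, Matrix.of_apply,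
        Fin.zero_eta, Fin.mk_one, Fin.isValue]
    · linear_combination (D 0 0) * htr - hdet
    · linear_combination (D 0 1) * htr
    · linear_combination (D 1 0) * htr
    · linear_combination (D 1 1) * htr - hdet
  have hDinv : D⁻¹ = -1 - D := by
    apply Matrix.inv_eq_right_inv
    rw [mul_sub, mul_neg, mul_one, hDD]
    abel
  have hMM : M * M = 0 := by
    subst hM
    ext i j
    simp only [Matrix.mul_apply, vecMulVec_apply, Fin.sum_univ_two, Matrix.zero_apply]
    simp only [dotProduct, Fin.sum_univ_two] at h0
    linear_combination (u i * up j) * h0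
  have hMDM : M * (D * M) = M := by
    subst hM
    ext i j
    simp only [Matrix.mul_apply, vecMulVec_apply, Fin.sum_univ_two]
    simp only [dotProduct, Matrix.mulVec, Fin.sum_univ_two] at h1
    linear_combination (u i * up j) * h1
  have hDD2 : ∀ A : Matrix (Fin 2) (Fin 2) F, D * (D * A) = -A - D * A := by
    intro A; rw [← mul_assoc, hDD]; noncomm_ring
  have hMM2 : ∀ A : Matrix (Fin 2) (Fin 2) F, M * (M * A) = 0 := by
    intro A; rw [← mul_assoc, hMM, zero_mul]
  have hMDM2 : ∀ A : Matrix (Fin 2) (Fin 2) F, M * (D * (M * A)) = M * A := by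
    intro A
    calc M * (D * (M * A)) = (M * (D * M)) * A := by noncomm_ring
    _ = M * A := by rw [hMDM]
  subst hX hY
  rw [hDinv]
  simp only [mul_add, add_mul, mul_sub, sub_mul, neg_mul, mul_neg, mul_one, one_mul,
    smul_add, smul_sub, smul_neg, smul_smul, mul_smul_comm, smul_mul_assoc, mul_assoc,
    hDD, hDD2, hMM, hMM2, hMDM, hMDM2, mul_zero, zero_mul, smul_zero, neg_neg,
    sub_zero, zero_sub, add_zero, zero_add]
  module
end
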